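/- Let k be a field of characteristic ≠ 2 and k_F G a twisted group algebra with a diagonal involution σ(x) = s(x)x. Then σ is a strong involution (a + σ(a) ∈ k·1 and a·σ(a) ∈ k·1 for all a ∈ k_F G) if and only if: (i) every element of G has order dividing 2 (so G ≅ (Z₂)ⁿ if G is finite abelian); (ii) s(e) = 1 and s(x) = -1 for all x ≠ e; and (iii) F(x,y)/F(y,x) = -1 whenever x ≠ e, y ≠ e, and x ≠ y. -/

import Mathlib

def delta {G : Type*} [DecidableEq G] {k : Type*} [Zero k] [One k] (x : G) : G → k :=
  fun y => if y = x then 1 else 0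

/-- The twisted product on the group algebra `kG`. -/
def tmul {G : Type*} [Group G] [Fintype G] {k : Type*} [Field k]
    (F : G → G → k) (a b : G → k) : G → k :=
  fun z => ∑ x : G, F x (x⁻¹ * z) * a x * b (x⁻¹ * z)

/-- The diagonal linear map `σ(x) = s(x) x` extended linearly. -/
def sigmaMap {G : Type*} {k : Type*} [Mul k] (s : G → k) (a : G → k) : G → k :=
  fun x => s x * a x

/-- `σ` is a strong involution of `k_F G`: an algebra involution with
`a + σ(a) ∈ k·1` and `a·σ(a) ∈ k·1` for all `a`. -/
def IsStrongInvolution {G : Type*} [Group G] [Fintype G] [DecidableEq G] {k : Type*} [Field k]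
    (F : G → G → k) (s : G → k) : Prop :=
  (∀ a : G → k, sigmaMap s (sigmaMap s a) = a) ∧
  sigmaMap s (delta 1) = (delta 1 : G → k) ∧
  (∀ a b : G → k, sigmaMap s (tmul F a b) = tmul F (sigmaMap s b) (sigmaMap s a)) ∧
  (∀ a : G → k, ∃ c : k, a + sigmaMap s a = c • (delta 1 : G → k)) ∧
  (∀ a : G → k, ∃ c : k, tmul F a (sigmaMap s a) = c • (delta 1 : G → k))

/-- The involutive permutation `u ↦ u⁻¹ * z` on a commutative group. -/
def flipz {G : Type*} [CommGroup G] (z : G) : Equiv.Perm G :=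
  Function.Involutive.toPerm (fun u => u⁻¹ * z) (fun u => by
    simp only [mul_inv_rev, inv_inv]
    rw [mul_comm z⁻¹ u, mul_assoc, inv_mul_cancel, mul_one])

@[simp] lemma flipz_apply {G : Type*} [CommGroup G] (z u : G) : flipz z u = u⁻¹ * z := rfl

/-- characterization of diagonal strong involutions. -/
theorem stmt7 {G : Type*} [CommGroup G] [Fintype G] [DecidableEq G] {k : Type*} [Field k]
    (h2 : (2 : k) ≠ 0)
    (F : G → G → k) (hne : ∀ x y, F x y ≠ 0)
    (hr : ∀ x, F x 1 = 1) (hl : ∀ x, F 1 x = 1)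
    (s : G → k) (hs : ∀ x, s x ≠ 0) :
    IsStrongInvolution F s
    ↔ ((∀ x : G, x * x = 1) ∧
       (s 1 = 1 ∧ ∀ x : G, x ≠ 1 → s x = -1) ∧
       (∀ x y : G, x ≠ 1 → y ≠ 1 → x ≠ y → F x y / F y x = -1)) := by
  classical
  constructor
  · rintro ⟨Hsq, H1, Hanti, Hadd, Hmul⟩
    have hs1 : s 1 = 1 := by
      have h := congrFun H1 (1 : G)
      simpa [sigmaMap, delta] using h
    have hsneg : ∀ x : G, x ≠ 1 → s x = -1 := by
      intro x hx
      obtain ⟨c, hc⟩ := Hadd (delta x)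
      have h := congrFun hc x
      simp [sigmaMap, delta, hx] at h
      linear_combination h
    have hord : ∀ x : G, x * x = 1 := by
      intro x
      by_contra hxx
      obtain ⟨c, hc⟩ := Hmul (delta x)
      have h := congrFun hc (x * x)
      simp only [tmul, sigmaMap, delta, Pi.smul_apply, smul_eq_mul, if_neg hxx,
        mul_zero] at h
      rw [Finset.sum_eq_single x (fun b _ hb => by simp [if_neg hb])
        (fun hx => absurd (Finset.mem_univ x) hx)] at h
      simp only [inv_mul_cancel_left, eq_self_iff_true, if_true, mul_one] at h
      rcases mul_eq_zero.mp h with h' | h'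
      · exact hne x x h'
      · exact hs x h'
    refine ⟨hord, ⟨hs1, hsneg⟩, ?_⟩
    intro x y hx hy hxy
    have hz : x * y ≠ 1 := by
      intro h
      have : y = x⁻¹ := eq_inv_of_mul_eq_one_left (by rw [mul_comm]; exact h)
      rw [inv_eq_of_mul_eq_one_right (hord x)] at this
      exact hxy this.symm
    obtain ⟨c, hc⟩ := Hmul (delta x + delta y)
    have h := congrFun hc (x * y)
    have hxinv : x⁻¹ * (x * y) = y := inv_mul_cancel_left x y
    have hyinv : y⁻¹ * (x * y) = x := by rw [mul_comm x y]; exact inv_mul_cancel_left y x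
    simp only [tmul, sigmaMap, Pi.add_apply, Pi.smul_apply, smul_eq_mul, delta,
      if_neg hz, mul_zero] at h
    rw [show (Finset.univ : Finset G) = ({x, y} : Finset G) ∪ (Finset.univ \ {x, y}) by
      simp [Finset.union_sdiff_of_subset (Finset.subset_univ _)]] at h
    rw [Finset.sum_union (Finset.disjoint_sdiff), Finset.sum_pair hxy] at h
    have hrest : ∀ u ∈ Finset.univ \ ({x, y} : Finset G),
        F u (u⁻¹ * (x * y)) * ((if u = x then (1:k) else 0) + (if u = y then 1 else 0)) *
          (s (u⁻¹ * (x * y)) *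
            ((if u⁻¹ * (x * y) = x then (1:k) else 0) + (if u⁻¹ * (x * y) = y then 1 else 0))) = 0 := by
      intro u hu
      simp only [Finset.mem_sdiff, Finset.mem_insert, Finset.mem_singleton, not_or] at hu
      rw [if_neg hu.2.1, if_neg hu.2.2]
      ring
    rw [Finset.sum_eq_zero hrest, add_zero] at h
    simp only [hxinv, hyinv, hxy, Ne.symm hxy, eq_self_iff_true, if_true, if_false,
      ite_false, if_neg hxy, if_neg (fun hyx : y = x => hxy hyx.symm),
      hsneg x hx, hsneg y hy] at h
    have hFe : F x y = -F y x := by linear_combination -h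
    rw [hFe, neg_div, div_self (hne y x)]
  · rintro ⟨hord, ⟨hs1, hsneg⟩, hF⟩
    have hinv : ∀ x : G, x⁻¹ = x := fun x => inv_eq_of_mul_eq_one_right (hord x)
    have hmul1 : ∀ x y : G, x * y = 1 → x = y := by
      intro x y h
      have : x = y⁻¹ := eq_inv_of_mul_eq_one_left h
      rwa [hinv] at this
    have hssq : ∀ x : G, s x * s x = 1 := by
      intro x
      by_cases hx : x = 1
      · rw [hx, hs1, mul_one]
      · rw [hsneg x hx]; norm_num
    have hFanti : ∀ x y : G, x ≠ 1 → y ≠ 1 → x ≠ y → F x y = -F y x := by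
      intro x y hx hy hxy
      have h := hF x y hx hy hxy
      have h' := (div_eq_iff (hne y x)).mp h
      linear_combination h'
    have key : ∀ x y : G, s (x * y) * F x y = s x * s y * F y x := by
      intro x y
      by_cases hx : x = 1
      · subst hx; simp [hl, hr, hs1]
      by_cases hy : y = 1
      · subst hy; simp [hl, hr, hs1]
      by_cases hxy : x = y
      · subst hxy; rw [hord x, hs1, one_mul, hssq x, one_mul]
      · have h1 : x * y ≠ 1 := fun h => hxy (hmul1 x y h)
        rw [hsneg _ h1, hsneg x hx, hsneg y hy, hFanti x y hx hy hxy]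
        ring
    have key2 : ∀ x y : G, x * y ≠ 1 → s y * F x y + s x * F y x = 0 := by
      intro x y hxy1
      by_cases hx : x = 1
      · subst hx
        have hy : y ≠ 1 := by simpa using hxy1
        rw [hl, hr, hsneg y hy, hs1]; ring
      by_cases hy : y = 1
      · subst hy
        rw [hr, hl, hsneg x hx, hs1]; ring
      have hxy : x ≠ y := fun h => hxy1 (h ▸ hord y)
      rw [hsneg x hx, hsneg y hy, hFanti x y hx hy hxy]
      ring
    refine ⟨?_, ?_, ?_, ?_, ?_⟩
    · intro a
      funext u
      show s u * (s u * a u) = a u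
      rw [← mul_assoc, hssq, one_mul]
    · funext u
      show s u * (delta 1 u : k) = delta 1 u
      by_cases h : u = 1
      · subst h; simp [delta, hs1]
      · simp [delta, h]
    · intro a b
      funext z
      show s z * (∑ u : G, F u (u⁻¹ * z) * a u * b (u⁻¹ * z)) =
        ∑ u : G, F u (u⁻¹ * z) * (s u * b u) * (s (u⁻¹ * z) * a (u⁻¹ * z))
      rw [← Equiv.sum_comp (flipz z)
        (fun u => F u (u⁻¹ * z) * (s u * b u) * (s (u⁻¹ * z) * a (u⁻¹ * z))),
        Finset.mul_sum]
      refine Finset.sum_congr rfl fun u _ => ?_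
      have hfl : (u⁻¹ * z)⁻¹ * z = u := by
        simp only [mul_inv_rev, inv_inv]
        rw [mul_comm z⁻¹ u, mul_assoc, inv_mul_cancel, mul_one]
      simp only [flipz_apply, hfl]
      have hk := key u (u⁻¹ * z)
      rw [mul_inv_cancel_left] at hk
      linear_combination (a u * b (u⁻¹ * z)) * hk
    · intro a
      refine ⟨(1 + s 1) * a 1, ?_⟩
      funext u
      show a u + s u * a u = (1 + s 1) * a 1 * delta 1 u
      by_cases h : u = 1
      · subst h
        rw [show (delta (1:G) (1:G) : k) = 1 from if_pos rfl]
        ring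
      · rw [hsneg u h]
        simp only [delta, if_neg h, mul_zero]
        ring
    · intro a
      refine ⟨tmul F a (sigmaMap s a) 1, ?_⟩
      funext z
      by_cases hz : z = 1
      · subst hz
        simp [delta]
      · show tmul F a (sigmaMap s a) z = tmul F a (sigmaMap s a) 1 * delta 1 z
        rw [show (delta 1 z : k) = 0 from if_neg hz, mul_zero]
        show (∑ u : G, F u (u⁻¹ * z) * a u * (s (u⁻¹ * z) * a (u⁻¹ * z))) = 0
        set T : G → k := fun u => F u (u⁻¹ * z) * a u * (s (u⁻¹ * z) * a (u⁻¹ * z)) with hT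
        have hTflip : ∀ u : G, T (flipz z u) = -T u := by
          intro u
          have hfl : (u⁻¹ * z)⁻¹ * z = u := by
            simp only [mul_inv_rev, inv_inv]
            rw [mul_comm z⁻¹ u, mul_assoc, inv_mul_cancel, mul_one]
          have hk := key2 u (u⁻¹ * z) (by rw [mul_inv_cancel_left]; exact hz)
          simp only [hT, flipz_apply, hfl]
          linear_combination (a u * a (u⁻¹ * z)) * hk
        have heq : (∑ u : G, T u) = -∑ u : G, T u := by
          conv_lhs => rw [← Equiv.sum_comp (flipz z) T]
          simp only [hTflip]
          rw [Finset.sum_neg_distrib]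
        have h2sum : (2 : k) * ∑ u : G, T u = 0 := by linear_combination heq
        rcases mul_eq_zero.mp h2sum with h' | h'
        · exact absurd h' h2
        · exact h'
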